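/- Let (B,C) be a precontact algebra, X = S(B) its Stone space, and R on X defined by uRv iff u × v ⊆ C. Then the Stone map s: B → CO(X) is a PCA-isomorphism from (B,C) onto (CO(X), C_R), where for clopen sets F,G: F C_R G iff ∃x∈F, ∃y∈G, xRy. In particular, for all a,b ∈ B: aCb iff s(a) C_R s(b). -/

import Mathlib

variable {B : Type*} [BooleanAlgebra B]

/-- A precontact relation on a Boolean algebra: axioms (C0) and (C+). -/
def IsPrecontact (C : B → B → Prop) : Prop :=
  (∀ a b, C a b → a ≠ ⊥ ∧ b ≠ ⊥) ∧
  (∀ a b c, C a (b ⊔ c) ↔ (C a b ∨ C a c)) ∧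
  (∀ a b c, C (a ⊔ b) c ↔ (C a c ∨ C b c))

/-- An ultrafilter of a Boolean algebra, as a set. -/
def IsUltrafilter (U : Set B) : Prop :=
  ⊥ ∉ U ∧ ⊤ ∈ U ∧ (∀ a b : B, a ∈ U → a ≤ b → b ∈ U) ∧
  (∀ a b : B, a ∈ U → b ∈ U → a ⊓ b ∈ U) ∧ (∀ a : B, a ∈ U ∨ aᶜ ∈ U)

/-- The Stone space of B: the set of ultrafilters of B. -/
def UltSpace (B : Type*) [BooleanAlgebra B] : Type _ := {U : Set B // IsUltrafilter U}

/-- The basic (cl)open set s(a) = {u : a ∈ u} of the Stone space. -/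
def stoneSet (a : B) : Set (UltSpace B) := {U | a ∈ U.1}

/-- The Stone topology, generated by the sets s(a). -/
instance : TopologicalSpace (UltSpace B) :=
  TopologicalSpace.generateFrom (Set.range (stoneSet (B := B)))

def IsFil (F : Set B) : Prop :=
  ⊤ ∈ F ∧ (∀ a b : B, a ∈ F → a ≤ b → b ∈ F) ∧ (∀ a b : B, a ∈ F → b ∈ F → a ⊓ b ∈ F)

lemma exists_ultra {G F₀ : Set B} (hbot : ⊥ ∉ G)
    (hup : ∀ x y : B, x ∈ G → x ≤ y → y ∈ G)
    (hsplit : ∀ x y : B, x ⊔ y ∈ G → x ∈ G ∨ y ∈ G)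
    (hF : IsFil F₀) (hFG : F₀ ⊆ G) :
    ∃ U : Set B, IsUltrafilter U ∧ F₀ ⊆ U ∧ U ⊆ G := by
  obtain ⟨M, hM0, hMS⟩ :
      ∃ M, F₀ ⊆ M ∧ Maximal (· ∈ {F : Set B | IsFil F ∧ F₀ ⊆ F ∧ F ⊆ G}) M := by
    obtain ⟨M, h1, h2⟩ := zorn_subset_nonempty {F : Set B | IsFil F ∧ F₀ ⊆ F ∧ F ⊆ G}
      (fun c hc hchain hne => by
        obtain ⟨F1, hF1⟩ := hne
        refine ⟨⋃₀ c, ⟨⟨?_, ?_, ?_⟩, ?_, ?_⟩, fun s hs => Set.subset_sUnion_of_mem hs⟩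
        · exact ⟨F1, hF1, (hc hF1).1.1⟩
        · rintro a b ⟨F2, hF2, haF2⟩ hab
          exact ⟨F2, hF2, (hc hF2).1.2.1 a b haF2 hab⟩
        · rintro a b ⟨F2, hF2, ha⟩ ⟨F3, hF3, hb⟩
          rcases hchain.total hF2 hF3 with h | h
          · exact ⟨F3, hF3, (hc hF3).1.2.2 a b (h ha) hb⟩
          · exact ⟨F2, hF2, (hc hF2).1.2.2 a b ha (h hb)⟩
        · exact ((hc hF1).2.1).trans (Set.subset_sUnion_of_mem hF1)
        · rintro x ⟨F2, hF2, hx⟩; exact (hc hF2).2.2 hx)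
      F₀ ⟨hF, le_refl _, hFG⟩
    exact ⟨M, h1, h2⟩
  obtain ⟨⟨⟨hMtop, hMup, hMinf⟩, hF0M, hMG⟩, hMmax'⟩ := hMS
  refine ⟨M, ⟨fun h => hbot (hMG h), hMtop, hMup, hMinf, ?_⟩, hM0, hMG⟩
  intro c
  -- extension filters
  set E : B → Set B := fun c => {x | ∃ p ∈ M, p ⊓ c ≤ x} with hE
  have hEfil : ∀ c, IsFil (E c) := by
    intro c
    refine ⟨⟨⊤, hMtop, le_top⟩, ?_, ?_⟩
    · rintro a b ⟨p, hp, hpa⟩ hab; exact ⟨p, hp, hpa.trans hab⟩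
    · rintro a b ⟨p, hp, hpa⟩ ⟨q, hq, hqb⟩
      exact ⟨p ⊓ q, hMinf p q hp hq, by
        refine le_inf ?_ ?_
        · exact le_trans (inf_le_inf_right _ inf_le_left) hpa
        · exact le_trans (inf_le_inf_right _ inf_le_right) hqb⟩
  have hME : ∀ c, M ⊆ E c := fun c x hx => ⟨x, hx, inf_le_left⟩
  have hcE : ∀ c, c ∈ E c := fun c => ⟨⊤, hMtop, by simp⟩
  have key : E c ⊆ G ∨ E cᶜ ⊆ G := by
    by_contra h
    push_neg at h
    rw [Set.not_subset, Set.not_subset] at h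
    obtain ⟨⟨x, ⟨p, hp, hpx⟩, hxG⟩, ⟨y, ⟨q, hq, hqy⟩, hyG⟩⟩ := h
    have h1 : p ⊓ c ∉ G := fun hg => hxG (hup _ _ hg hpx)
    have h2 : q ⊓ cᶜ ∉ G := fun hg => hyG (hup _ _ hg hqy)
    have hr : p ⊓ q ∈ G := hMG (hMinf p q hp hq)
    have hle : p ⊓ q ≤ (p ⊓ c) ⊔ (q ⊓ cᶜ) := by
      have : p ⊓ q = (p ⊓ q ⊓ c) ⊔ (p ⊓ q ⊓ cᶜ) := by
        rw [← inf_sup_left]; simp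
      rw [this]
      exact sup_le_sup (inf_le_inf_right _ inf_le_left) (inf_le_inf_right _ inf_le_right)
    rcases hsplit _ _ (hup _ _ hr hle) with h | h
    · exact h1 h
    · exact h2 h
  rcases key with h | h
  · left
    have : E c = M := subset_antisymm (hMmax' ⟨hEfil c, hF0M.trans (hME c), h⟩ (hME c)) (hME c)
    exact this ▸ hcE c
  · right
    have : E cᶜ = M := subset_antisymm (hMmax' ⟨hEfil cᶜ, hF0M.trans (hME cᶜ), h⟩ (hME cᶜ)) (hME cᶜ)
    exact this ▸ hcE cᶜ

lemma exists_ultra_point {G : Set B} {a : B} (hbot : ⊥ ∉ G)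
    (hup : ∀ x y : B, x ∈ G → x ≤ y → y ∈ G)
    (hsplit : ∀ x y : B, x ⊔ y ∈ G → x ∈ G ∨ y ∈ G)
    (ha : a ∈ G) :
    ∃ U : Set B, IsUltrafilter U ∧ a ∈ U ∧ U ⊆ G := by
  obtain ⟨U, h1, h2, h3⟩ := exists_ultra (F₀ := {x : B | a ≤ x}) hbot hup hsplit
    ⟨le_top, fun x y hx hxy => hx.trans hxy, fun x y hx hy => le_inf hx hy⟩
    (fun x hx => hup a x ha hx)
  exact ⟨U, h1, h2 (le_refl a), h3⟩
-- appended to statement defs + core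
open TopologicalSpace

lemma stone_sup (a b : B) : stoneSet (a ⊔ b) = stoneSet a ∪ stoneSet b := by
  ext u
  obtain ⟨hbot, htop, hup, hinf, hcomp⟩ := u.2
  constructor
  · intro h
    by_contra hn
    rw [Set.mem_union, not_or] at hn
    obtain ⟨ha, hb⟩ := hn
    have ha' : aᶜ ∈ u.1 := (hcomp a).resolve_left ha
    have hb' : bᶜ ∈ u.1 := (hcomp b).resolve_left hb
    have hmem : (a ⊔ b) ⊓ (aᶜ ⊓ bᶜ) ∈ u.1 := hinf _ _ h (hinf _ _ ha' hb')
    have hbb : (a ⊔ b) ⊓ (aᶜ ⊓ bᶜ) = ⊥ := by rw [← compl_sup, inf_compl_eq_bot]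
    exact hbot (hbb ▸ hmem)
  · rintro (h | h)
    · exact hup a _ h le_sup_left
    · exact hup b _ h le_sup_right

lemma stone_inf (a b : B) : stoneSet (a ⊓ b) = stoneSet a ∩ stoneSet b := by
  ext u
  obtain ⟨hbot, htop, hup, hinf, hcomp⟩ := u.2
  exact ⟨fun h => ⟨hup _ _ h inf_le_left, hup _ _ h inf_le_right⟩,
    fun ⟨h1, h2⟩ => hinf _ _ h1 h2⟩

lemma stone_compl (a : B) : stoneSet (aᶜ : B) = (stoneSet a)ᶜ := by
  ext u
  obtain ⟨hbot, htop, hup, hinf, hcomp⟩ := u.2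
  constructor
  · intro h ha
    have := hinf _ _ ha h
    simp at this
    exact hbot this
  · intro h
    exact (hcomp a).resolve_left h

lemma stone_bot : stoneSet (⊥ : B) = ∅ := by
  ext u; exact ⟨fun h => (u.2.1 h).elim, fun h => h.elim⟩

lemma stone_top : stoneSet (⊤ : B) = Set.univ := by
  ext u; exact ⟨fun _ => trivial, fun _ => u.2.2.1⟩

lemma stone_basis : IsTopologicalBasis (Set.range (stoneSet (B := B))) := by
  refine isTopologicalBasis_of_subbasis_of_finiteInter rfl ⟨⟨⊤, stone_top⟩, ?_⟩
  rintro _ ⟨a, rfl⟩ _ ⟨b, rfl⟩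
  exact ⟨a ⊓ b, stone_inf a b⟩

lemma stone_clopen (a : B) : IsClopen (stoneSet a) := by
  constructor
  · rw [← isOpen_compl_iff, ← stone_compl]
    exact stone_basis.isOpen ⟨aᶜ, rfl⟩
  · exact stone_basis.isOpen ⟨a, rfl⟩

lemma stone_finsup (t : Finset B) (g : B → B) :
    stoneSet (t.sup g) = ⋃ c ∈ t, stoneSet (g c) := by
  classical
  induction t using Finset.induction_on with
  | empty => simp [stone_bot]
  | insert a s _ ih => rw [Finset.sup_insert, stone_sup, ih]; simp

lemma stone_inj : Function.Injective (stoneSet (B := B)) := by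
  have key : ∀ a b : B, stoneSet a = stoneSet b → a ≤ b := by
    intro a b hab
    by_contra h
    have hne : a ⊓ bᶜ ≠ ⊥ := by
      intro he
      exact h (sdiff_eq_bot_iff.1 (by rw [sdiff_eq]; exact he))
    obtain ⟨U, hU, haU, -⟩ := exists_ultra_point (G := {p : B | p ≠ ⊥})
      (by simp) (fun x y hx hxy => by
        simp only [Set.mem_setOf_eq] at *
        intro he; exact hx (le_antisymm (he ▸ hxy) bot_le))
      (fun x y hxy => by
        by_contra hc; push_neg at hc
        simp only [Set.mem_setOf_eq, not_not] at hc hxy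
        exact hxy (by rw [hc.1, hc.2, sup_idem]))
      hne
    obtain ⟨hbot, htop, hup, hinf, hcomp⟩ := hU
    have ha : a ∈ U := hup _ _ haU inf_le_left
    have hbc : bᶜ ∈ U := hup _ _ haU inf_le_right
    have hb : b ∈ (⟨U, hbot, htop, hup, hinf, hcomp⟩ : UltSpace B).1 := by
      rw [show b ∈ _ ↔ (⟨U, hbot, htop, hup, hinf, hcomp⟩ : UltSpace B) ∈ stoneSet b from Iff.rfl,
        ← hab]
      exact ha
    have : b ⊓ bᶜ ∈ U := hinf _ _ hb hbc
    simp at this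
    exact hbot this
  exact fun a b hab => le_antisymm (key a b hab) (key b a hab.symm)

lemma stone_surj (F : Set (UltSpace B)) (hF : IsClopen F) : ∃ a : B, stoneSet a = F := by
  classical
  obtain ⟨S1, hS1, hF1⟩ := stone_basis.open_eq_sUnion hF.2
  obtain ⟨S2, hS2, hF2⟩ := stone_basis.open_eq_sUnion hF.1.isOpen_compl
  set K : Set B := {a : B | stoneSet a ⊆ F ∨ stoneSet a ⊆ Fᶜ} with hK
  have hcover : ∀ u : UltSpace B, ∃ a ∈ K, a ∈ u.1 := by
    intro u
    by_cases hu : u ∈ F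
    · rw [hF1] at hu
      obtain ⟨t, ht, hut⟩ := hu
      obtain ⟨a, rfl⟩ := hS1 ht
      exact ⟨a, Or.inl (hF1 ▸ Set.subset_sUnion_of_mem ht), hut⟩
    · have hu' : u ∈ Fᶜ := hu
      rw [hF2] at hu'
      obtain ⟨t, ht, hut⟩ := hu'
      obtain ⟨a, rfl⟩ := hS2 ht
      exact ⟨a, Or.inr (hF2 ▸ Set.subset_sUnion_of_mem ht), hut⟩
  set F₀ : Set B := {x : B | ∃ t : Finset B, ↑t ⊆ K ∧ (t.sup id)ᶜ ≤ x} with hF₀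
  have hfil : IsFil F₀ := by
    refine ⟨⟨∅, by simp, by simp⟩, ?_, ?_⟩
    · rintro a b ⟨t, ht, hta⟩ hab; exact ⟨t, ht, hta.trans hab⟩
    · rintro a b ⟨t, ht, hta⟩ ⟨s, hs, hsb⟩
      refine ⟨t ∪ s, by simp only [Finset.coe_union, Set.union_subset_iff]; exact ⟨ht, hs⟩, ?_⟩
      rw [Finset.sup_union, compl_sup]
      exact le_inf (inf_le_left.trans hta) (inf_le_right.trans hsb)
  by_cases hb : ⊥ ∈ F₀
  · obtain ⟨t, ht, hta⟩ := hb
    have hsup : t.sup id = ⊤ := by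
      have : (t.sup id)ᶜ = ⊥ := le_antisymm hta bot_le
      rw [← compl_compl (t.sup id), this, compl_bot]
    set g : B → B := fun c => if stoneSet c ⊆ F then c else ⊥ with hg
    refine ⟨t.sup g, subset_antisymm ?_ ?_⟩
    · rw [stone_finsup]
      refine Set.iUnion₂_subset fun c hc => ?_
      by_cases h : stoneSet c ⊆ F
      · simp [hg, h]
      · simp [hg, h, stone_bot]
    · intro u hu
      have : u ∈ stoneSet (t.sup id) := by rw [hsup, stone_top]; trivial
      rw [stone_finsup] at this
      obtain ⟨_, ⟨c, rfl⟩, hm⟩ := this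
      simp only [Set.mem_iUnion] at hm
      obtain ⟨hct, huc⟩ := hm
      have hcK : c ∈ K := ht hct
      have hcF : stoneSet c ⊆ F := by
        rcases hcK with h | h
        · exact h
        · exact absurd (h huc) (by simpa using hu)
      have : g c ≤ t.sup g := Finset.le_sup hct
      rw [hg] at this
      simp only [hcF, if_pos] at this
      exact u.2.2.2.1 c _ huc this
  · have hF₀G : F₀ ⊆ {p : B | p ≠ ⊥} := by
      intro x hx he
      exact hb (he ▸ hx)
    obtain ⟨U, hU, hF0U, hUG⟩ := exists_ultra (G := {p : B | p ≠ ⊥})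
      (by simp) (fun x y hx hxy => by
        simp only [Set.mem_setOf_eq] at *
        intro he; exact hx (le_antisymm (he ▸ hxy) bot_le))
      (fun x y hxy => by
        by_contra hc; push_neg at hc
        simp only [Set.mem_setOf_eq, not_not] at hc hxy
        exact hxy (by rw [hc.1, hc.2, sup_idem]))
      hfil hF₀G
    exfalso
    obtain ⟨a, haK, haU⟩ := hcover ⟨U, hU⟩
    have : aᶜ ∈ F₀ := ⟨{a}, by simpa using haK, by simp⟩
    have h2 : a ⊓ aᶜ ∈ U := hU.2.2.2.1 _ _ haU (hF0U this)
    simp at h2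
    exact hU.1 h2

theorem stmt12' (C : B → B → Prop) (hC : IsPrecontact C) :
    (∀ a b : B, C a b ↔ ∃ u ∈ stoneSet a, ∃ v ∈ stoneSet b,
      (∀ p ∈ u.1, ∀ q ∈ v.1, C p q)) := by
  obtain ⟨hC0, hCr, hCl⟩ := hC
  intro a b
  constructor
  · intro hab
    -- first ultrafilter
    obtain ⟨U, hU, haU, hUG⟩ := exists_ultra_point (G := {p : B | C p b})
      (fun h => absurd rfl (hC0 _ _ h).1)
      (fun x y hx hxy => by
        have : C (x ⊔ y) b := (hCl x y b).2 (Or.inl hx)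
        rwa [sup_eq_right.2 hxy] at this)
      (fun x y hxy => (hCl x y b).1 hxy)
      hab
    obtain ⟨U2, hU2, hbU2, hU2G⟩ := exists_ultra_point (G := {q : B | ∀ p ∈ U, C p q})
      (fun h => absurd rfl (hC0 _ _ (h ⊤ hU.2.1)).2)
      (fun x y hx hxy p hp => by
        have : C p (x ⊔ y) := (hCr p x y).2 (Or.inl (hx p hp))
        rwa [sup_eq_right.2 hxy] at this)
      (fun x y hxy => by
        by_contra hc
        simp only [Set.mem_setOf_eq] at hc
        push_neg at hc
        obtain ⟨⟨p1, hp1, hp1x⟩, ⟨p2, hp2, hp2y⟩⟩ := hc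
        have hp : p1 ⊓ p2 ∈ U := hU.2.2.2.1 _ _ hp1 hp2
        rcases (hCr (p1 ⊓ p2) x y).1 (hxy _ hp) with h | h
        · exact hp1x (by
            have : C (p1 ⊓ p2 ⊔ p1) x := (hCl _ _ _).2 (Or.inl h)
            rwa [sup_eq_right.2 inf_le_left] at this)
        · exact hp2y (by
            have : C (p1 ⊓ p2 ⊔ p2) y := (hCl _ _ _).2 (Or.inl h)
            rwa [sup_eq_right.2 inf_le_right] at this))
      (fun p hp => hUG hp)
    exact ⟨⟨U, hU⟩, haU, ⟨U2, hU2⟩, hbU2, fun p hp q hq => hU2G hq p hp⟩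
  · rintro ⟨u, hau, v, hbv, h⟩
    exact h a hau b hbv

theorem stmt12 (C : B → B → Prop) (hC : IsPrecontact C) :
    (∀ a : B, IsClopen (stoneSet a)) ∧
    Function.Injective (stoneSet (B := B)) ∧
    (∀ F : Set (UltSpace B), IsClopen F → ∃ a : B, stoneSet a = F) ∧
    (∀ a b : B, stoneSet (a ⊔ b) = stoneSet a ∪ stoneSet b) ∧
    (∀ a b : B, stoneSet (a ⊓ b) = stoneSet a ∩ stoneSet b) ∧
    (∀ a : B, stoneSet aᶜ = (stoneSet a)ᶜ) ∧
    (stoneSet (⊥ : B) = ∅) ∧ (stoneSet (⊤ : B) = Set.univ) ∧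
    (∀ a b : B, C a b ↔ ∃ u ∈ stoneSet a, ∃ v ∈ stoneSet b,
      (∀ p ∈ u.1, ∀ q ∈ v.1, C p q)) := by
  exact ⟨stone_clopen, stone_inj, stone_surj, stone_sup, stone_inf, stone_compl,
    stone_bot, stone_top, stmt12' C hC⟩
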